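/- Let P be a finite poset with a unique maximal element. Suppose that for all x, y ∈ P that are covered by a common element z, either {x,y} has no common lower bound or the meet x ∧ y exists. Then P is a join-semilattice: every pair of elements of P has a least upper bound. -/

import Mathlib

/-- Key lemma: under the diamond condition, any two minimal upper bounds of a pair
that lie below a common element `w` are equal. Proved by well-founded induction on `w`. -/
private lemma unique_minimal_ub {P : Type*} [PartialOrder P] [Fintype P]
    (h : ∀ x y z : P, x ⋖ z → y ⋖ z →
      (¬ ∃ w, w ≤ x ∧ w ≤ y) ∨ ∃ m, IsGLB {x, y} m) :
    ∀ w x y u v : P, Minimal (fun t => x ≤ t ∧ y ≤ t) u →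
      Minimal (fun t => x ≤ t ∧ y ≤ t) v → u ≤ w → v ≤ w → u = v := by
  have : WellFoundedLT P := Finite.to_wellFoundedLT
  intro w
  induction w using WellFoundedLT.induction with
  | ind w IH =>
    intro x y u v hu hv huw hvw
    by_contra hne
    -- replace w by a minimal common upper bound of u and v
    obtain ⟨w', hw'le, hw'min⟩ :=
      exists_minimal_le_of_wellFoundedLT (a := w) (P := fun t => u ≤ t ∧ v ≤ t) ⟨huw, hvw⟩
    obtain hlt | heq := lt_or_eq_of_le hw'le
    · exact hne (IH w' hlt x y u v hu hv hw'min.prop.1 hw'min.prop.2)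
    subst heq
    -- now w itself is a minimal upper bound of {u, v}
    have huw' : u < w' := lt_of_le_of_ne huw (by
      rintro rfl
      exact hne (hu.eq_of_ge hv.prop hvw))
    have hvw' : v < w' := lt_of_le_of_ne hvw (by
      rintro rfl
      exact hne (hv.eq_of_ge hu.prop huw).symm)
    obtain ⟨u', huu', hu'w⟩ := exists_le_covBy_of_lt huw'
    obtain ⟨v', hvv', hv'w⟩ := exists_le_covBy_of_lt hvw'
    have hxu : x ≤ u := hu.prop.1
    have hyu : y ≤ u := hu.prop.2
    have hxv : x ≤ v := hv.prop.1
    have hyv : y ≤ v := hv.prop.2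
    have hu'v' : u' ≠ v' := by
      rintro rfl
      exact absurd (hw'min.eq_of_le ⟨huu', hvv'⟩ hu'w.le) (ne_of_lt hu'w.lt)
    rcases h u' v' w' hu'w hv'w with hno | ⟨m, hm⟩
    · exact hno ⟨x, hxu.trans huu', hxv.trans hvv'⟩
    have hm_lb : ∀ t : P, t ≤ u' → t ≤ v' → t ≤ m := fun t h1 h2 =>
      hm.2 (by rintro s (rfl | rfl) <;> assumption)
    have hmu' : m ≤ u' := hm.1 (Set.mem_insert _ _)
    have hmv' : m ≤ v' := hm.1 (Set.mem_insert_of_mem _ rfl)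
    have hxm : x ≤ m := hm_lb x (hxu.trans huu') (hxv.trans hvv')
    have hym : y ≤ m := hm_lb y (hyu.trans huu') (hyv.trans hvv')
    -- a minimal upper bound of {x,y} below m
    obtain ⟨m₀, hm₀le, hm₀min⟩ :=
      exists_minimal_le_of_wellFoundedLT (a := m) (P := fun t => x ≤ t ∧ y ≤ t) ⟨hxm, hym⟩
    -- u and m₀ are both minimal upper bounds below u' < w, hence equal
    have hum : u ≤ m :=
      (IH u' hu'w.lt x y u m₀ hu hm₀min huu' (hm₀le.trans hmu')).trans_le hm₀le
    have hvm : v ≤ m :=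
      (IH v' hv'w.lt x y v m₀ hv hm₀min hvv' (hm₀le.trans hmv')).trans_le hm₀le
    have : m = w' := hw'min.eq_of_le ⟨hum, hvm⟩ (hmu'.trans hu'w.le)
    exact absurd this (ne_of_lt (lt_of_le_of_lt hmu' hu'w.lt))

/-- a finite poset with a unique maximal element, in which any two
elements covered by a common element either have no common lower bound or have a
meet, is a join-semilattice. -/
theorem join_semilattice_of_diamond_condition {P : Type*} [PartialOrder P] [Fintype P]
    (hmax : ∃! m : P, IsMax m)
    (h : ∀ x y z : P, x ⋖ z → y ⋖ z →
      (¬ ∃ w, w ≤ x ∧ w ≤ y) ∨ ∃ m, IsGLB {x, y} m) :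
    ∀ x y : P, ∃ j, IsLUB {x, y} j := by
  obtain ⟨top, htop, huniq⟩ := hmax
  -- top is the greatest element
  have hle_top : ∀ a : P, a ≤ top := by
    intro a
    obtain ⟨b, hab, hb⟩ := Finite.exists_le_maximal (a := a) (p := fun _ => True) trivial
    have : IsMax b := fun c hc => hb.2 trivial hc
    exact (huniq b this) ▸ hab
  intro x y
  obtain ⟨u, -, humin⟩ :=
    exists_minimal_le_of_wellFoundedLT (a := top) (P := fun t => x ≤ t ∧ y ≤ t)
      ⟨hle_top x, hle_top y⟩
  refine ⟨u, ?_, ?_⟩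
  · rintro s (rfl | rfl)
    exacts [humin.prop.1, humin.prop.2]
  · intro z hz
    have hxz : x ≤ z := hz (Set.mem_insert _ _)
    have hyz : y ≤ z := hz (Set.mem_insert_of_mem _ rfl)
    obtain ⟨u₀, hu₀z, hu₀min⟩ :=
      exists_minimal_le_of_wellFoundedLT (a := z) (P := fun t => x ≤ t ∧ y ≤ t) ⟨hxz, hyz⟩
    exact (unique_minimal_ub h top x y u u₀ humin hu₀min (hle_top u)
      (hle_top u₀)).trans_le hu₀z
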